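/- Let p be an odd prime. Every coefficient of the polynomial G^{(α)}(X) ∈ F_p(α)[X] belongs to the subring F_p[α, (α^{p−1} − 1)^{−1}] of F_p(α); equivalently, for each 1 ≤ k ≤ p−1 there exist a polynomial f_k(α) ∈ F_p[α] and a nonnegative integer m_k such that the coefficient of X^k in G^{(α)}(X) equals f_k(α)/(α^{p−1} − 1)^{m_k}. -/

import Mathlib

open Polynomial Finset

noncomputable def binomF {K : Type*} [Field K] (f : K) (m : ℕ) : K :=
  Polynomial.eval f (descPochhammer K m) / (m.factorial : K)

noncomputable def bF (p : ℕ) {K : Type*} [Field K] (r s : ℕ) (a : K) : K :=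
  ∑ k ∈ Finset.range p,
    (-(r : K) / (s : K)) ^ k * binomF ((r : K) * a - 1) (p - 1 - k) *
      binomF ((s : K) * a - 1) k

noncomputable def Gpoly (p : ℕ) {K : Type*} [Field K] (a : K) : Polynomial K :=
  -∑ k ∈ Finset.Icc 1 (p - 1),
    Polynomial.C ((k : K)⁻¹ / ∏ s ∈ Finset.Icc 1 (k - 1), bF p 1 s a) * Polynomial.X ^ k


section Aux

variable (p : ℕ) [Fact p.Prime]

noncomputable def ch (q : Polynomial (ZMod p)) (m : ℕ) : Polynomial (ZMod p) :=
  C ((m.factorial : ZMod p))⁻¹ * (descPochhammer (ZMod p) m).comp q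

noncomputable def bpoly (s n : ℕ) : Polynomial (ZMod p) :=
  ∑ k ∈ range (n + 1), C ((-(s : ZMod p)⁻¹) ^ k) * ch p (X - 1) (n - k)
    * ch p (C (s : ZMod p) * X - 1) k

lemma ch_zero (q : Polynomial (ZMod p)) : ch p q 0 = 1 := by
  simp [ch, descPochhammer]

lemma fact_ne_zero {m : ℕ} (hm : m < p) : ((m.factorial : ZMod p)) ≠ 0 := by
  have := (Fact.out : p.Prime)
  rw [Ne, ZMod.natCast_eq_zero_iff]
  intro h
  have := (Nat.Prime.dvd_factorial this).mp h
  omega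

lemma desc_pascal (q : Polynomial (ZMod p)) (m : ℕ) :
    (descPochhammer (ZMod p) (m + 1)).comp (q + 1)
      = (descPochhammer (ZMod p) (m + 1)).comp q
        + (C ((m : ZMod p) + 1)) * (descPochhammer (ZMod p) m).comp q := by
  have h1 := descPochhammer_succ_left (ZMod p) m
  have h2 := descPochhammer_succ_right (ZMod p) m
  have e1 : (descPochhammer (ZMod p) (m+1)).comp (q + 1)
      = (q + 1) * (descPochhammer (ZMod p) m).comp q := by
    rw [h1, mul_comp, X_comp, comp_assoc]
    simp
  have e2 : (descPochhammer (ZMod p) (m+1)).comp q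
      = (descPochhammer (ZMod p) m).comp q * (q - (C (m : ZMod p))) := by
    rw [h2, mul_comp, sub_comp, X_comp]
    simp [Polynomial.natCast_comp, Polynomial.C_eq_natCast]
  rw [e1, e2]
  simp only [map_add, map_one]
  ring

lemma ch_pascal (q : Polynomial (ZMod p)) (m : ℕ) (hm : m + 1 < p) :
    ch p (q + 1) (m + 1) = ch p q (m + 1) + ch p q m := by
  have hfact : ((m + 1).factorial : ZMod p) = ((m : ZMod p) + 1) * (m.factorial : ZMod p) := by
    rw [Nat.factorial_succ]; push_cast; ring
  have h1 : ((m+1).factorial : ZMod p) ≠ 0 := fact_ne_zero p hm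
  have h2 : ((m).factorial : ZMod p) ≠ 0 := fact_ne_zero p (by omega)
  have h3 : ((m : ZMod p) + 1) ≠ 0 := by
    intro h; rw [h, mul_comm] at hfact; simp at hfact; exact h1 hfact
  unfold ch
  rw [desc_pascal]
  rw [mul_add]
  congr 1
  rw [← mul_assoc, ← C_mul]
  congr 2
  rw [hfact, mul_inv]
  field_simp

lemma ch_vandermonde (q : Polynomial (ZMod p)) (j : ℕ) :
    ∀ m : ℕ, m < p → ch p (q + (j : Polynomial (ZMod p))) m
      = ∑ i ∈ range (m + 1), C ((j.choose i : ZMod p)) * ch p q (m - i) := by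
  induction j with
  | zero =>
    intro m _
    rw [Nat.cast_zero, add_zero]
    rw [Finset.sum_eq_single 0]
    · simp
    · intro i hi hne
      have : (0 : ℕ).choose i = 0 := by
        cases i with
        | zero => exact absurd rfl hne
        | succ n => simp [Nat.choose]
      simp [this]
    · simp
  | succ j ih =>
    intro m hm
    have key : (q + ((j+1 : ℕ) : Polynomial (ZMod p))) = (q + (j : Polynomial (ZMod p))) + 1 := by
      push_cast; ring
    rw [key]
    cases m with
    | zero =>
      simp [ch, descPochhammer]
    | succ m =>
      rw [ch_pascal p _ m hm, ih (m+1) hm, ih m (by omega)]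
      -- target: ∑_{i∈range(m+2)} C((j+1).choose i) ch q (m+1-i)
      rw [Finset.sum_range_succ' (fun i => C (((j+1).choose i : ZMod p)) * ch p q (m + 1 - i)) (m+1)]
      rw [Finset.sum_range_succ' (fun i => C ((j.choose i : ZMod p)) * ch p q (m + 1 - i)) (m+1)]
      have hch : ∀ i, ((j+1).choose (i+1) : ZMod p) = (j.choose (i+1) : ZMod p) + (j.choose i : ZMod p) := by
        intro i; rw [Nat.choose_succ_succ]; push_cast; ring
      simp only [hch, Nat.choose_zero_right, Nat.cast_one, map_one, one_mul, map_add, add_mul]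
      rw [Finset.sum_add_distrib]
      simp only [show ∀ i:ℕ, m + 1 - (i+1) = m - i from fun i => by omega]
      ring

lemma ch_comp (q r : Polynomial (ZMod p)) (m : ℕ) :
    (ch p q m).comp r = ch p (q.comp r) m := by
  simp [ch, mul_comp, comp_assoc]

noncomputable def ucoef (s m : ℕ) : ZMod p :=
  (s.choose m : ZMod p) * (-(s : ZMod p)⁻¹) ^ m
    + if m = 0 then 0 else (s.choose (m-1) : ZMod p) * (-(s : ZMod p)⁻¹) ^ (m-1)

lemma ucoef_zero (s : ℕ) : ucoef p s 0 = 1 := by simp [ucoef]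

lemma ucoef_one (s : ℕ) (hs : (s : ZMod p) ≠ 0) : ucoef p s 1 = 0 := by
  simp [ucoef]
  field_simp
  ring

lemma coeff_mul_congr {R : Type*} [CommRing R] (F F' G G' : PowerSeries R) (n : ℕ)
    (hF : ∀ i ≤ n, PowerSeries.coeff i F = PowerSeries.coeff i F')
    (hG : ∀ i ≤ n, PowerSeries.coeff i G = PowerSeries.coeff i G') :
    PowerSeries.coeff n (F * G) = PowerSeries.coeff n (F' * G') := by
  rw [PowerSeries.coeff_mul, PowerSeries.coeff_mul]
  refine Finset.sum_congr rfl fun ij hij => ?_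
  rw [Finset.HasAntidiagonal.mem_antidiagonal] at hij
  rw [hF _ (by omega), hG _ (by omega)]

lemma bpoly_recurrence (s n : ℕ) (hn : n ≤ p - 1) :
    (bpoly p s n).comp (X + 1)
      = ∑ m ∈ range (n + 1), C (ucoef p s m) * bpoly p s (n - m) := by
  classical
  have hp : 2 ≤ p := (Fact.out : p.Prime).two_le
  set x : ZMod p := -(s : ZMod p)⁻¹ with hx
  set q : Polynomial (ZMod p) := C (s : ZMod p) * X - 1 with hq
  set A : PowerSeries (Polynomial (ZMod p)) := PowerSeries.mk (fun m => ch p (X - 1) m) with hA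
  set A' : PowerSeries (Polynomial (ZMod p)) := PowerSeries.mk (fun m => ch p X m) with hA'
  set B : PowerSeries (Polynomial (ZMod p)) :=
    PowerSeries.mk (fun m => C (x ^ m) * ch p q m) with hB
  set B' : PowerSeries (Polynomial (ZMod p)) :=
    PowerSeries.mk (fun m => C (x ^ m) * ch p (q + (s : Polynomial (ZMod p))) m) with hB'
  set V : PowerSeries (Polynomial (ZMod p)) :=
    PowerSeries.mk (fun m => C ((s.choose m : ZMod p) * x ^ m)) with hV
  set U : PowerSeries (Polynomial (ZMod p)) :=
    PowerSeries.mk (fun m => C (ucoef p s m)) with hU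
  -- (i) coefficients of B*A are the bpoly's
  have hi : ∀ N : ℕ, PowerSeries.coeff N (B * A) = bpoly p s N := by
    intro N
    rw [PowerSeries.coeff_mul, Finset.Nat.sum_antidiagonal_eq_sum_range_succ_mk]
    unfold bpoly
    refine Finset.sum_congr rfl fun k hk => ?_
    rw [hB, hA]
    simp only [PowerSeries.coeff_mk]
    ring
  -- (ii) composed bpoly is coefficient of B'*A'
  have hii : (bpoly p s n).comp (X + 1) = PowerSeries.coeff n (B' * A') := by
    rw [PowerSeries.coeff_mul, Finset.Nat.sum_antidiagonal_eq_sum_range_succ_mk]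
    unfold bpoly
    rw [Polynomial.sum_comp]
    refine Finset.sum_congr rfl fun k hk => ?_
    rw [hB', hA']
    simp only [PowerSeries.coeff_mk]
    rw [mul_comp, mul_comp, C_comp, ch_comp, ch_comp]
    have e1 : (X - 1 : Polynomial (ZMod p)).comp (X + 1) = X := by
      simp [sub_comp]
    have e2 : q.comp (X + 1) = q + (s : Polynomial (ZMod p)) := by
      rw [hq]
      simp only [sub_comp, mul_comp, C_comp, X_comp, one_comp]
      rw [Polynomial.C_eq_natCast]
      ring
    rw [e1, e2]
    ring
  -- (iii) A' agrees with A * (1 + X) up to degree p-1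
  have hiii : ∀ i ≤ p - 1, PowerSeries.coeff i A'
      = PowerSeries.coeff i (A * (1 + PowerSeries.X)) := by
    intro i hi'
    rw [mul_add, mul_one, map_add, mul_comm A PowerSeries.X]
    cases i with
    | zero =>
      rw [PowerSeries.coeff_zero_X_mul, hA, hA']
      simp only [PowerSeries.coeff_mk, add_zero]
      rw [ch_zero, ch_zero]
    | succ m =>
      rw [PowerSeries.coeff_succ_X_mul, hA, hA']
      simp only [PowerSeries.coeff_mk]
      have hP := ch_pascal p (X - 1 : Polynomial (ZMod p)) m (by omega)
      rw [sub_add_cancel] at hP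
      rw [hP]
  -- (iv) B' agrees with B * V up to degree p-1
  have hiv : ∀ i ≤ p - 1, PowerSeries.coeff i B'
      = PowerSeries.coeff i (B * V) := by
    intro m hm
    rw [PowerSeries.coeff_mul, Finset.Nat.sum_antidiagonal_eq_sum_range_succ_mk, hB', hB, hV]
    simp only [PowerSeries.coeff_mk]
    rw [ch_vandermonde p q s m (by omega)]
    rw [← Finset.sum_range_reflect (fun i => C ((s.choose i : ZMod p)) * ch p q (m - i)) (m+1)]
    rw [Finset.mul_sum]
    refine Finset.sum_congr rfl fun k hk => ?_
    rw [Finset.mem_range] at hk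
    have h1 : m + 1 - 1 - k = m - k := by omega
    have h2 : m - (m - k) = k := by omega
    rw [h1, h2]
    have h3 : x ^ m = x ^ k * x ^ (m - k) := by rw [← pow_add]; congr 1; omega
    rw [h3, map_mul, map_mul]
    ring
  -- (v) U = (1 + X) * V
  have hv : U = (1 + PowerSeries.X) * V := by
    ext N
    rw [add_mul, one_mul, map_add, hU, hV]
    cases N with
    | zero =>
      rw [PowerSeries.coeff_zero_X_mul]
      simp [ucoef]
    | succ m =>
      rw [PowerSeries.coeff_succ_X_mul]
      simp only [PowerSeries.coeff_mk, ucoef]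
      rw [if_neg (Nat.succ_ne_zero m)]
      rw [← hx]
      simp only [Nat.add_sub_cancel]
      rw [map_add]
  -- assemble
  rw [hii, coeff_mul_congr B' (B * V) A' (A * (1 + PowerSeries.X)) n
    (fun i hi' => hiv i (le_trans hi' hn)) (fun i hi' => hiii i (le_trans hi' hn))]
  have hre : (B * V) * (A * (1 + PowerSeries.X)) = U * (B * A) := by
    rw [hv]; ring
  rw [hre, PowerSeries.coeff_mul, Finset.Nat.sum_antidiagonal_eq_sum_range_succ_mk]
  refine Finset.sum_congr rfl fun m hm => ?_
  rw [hi, hU]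
  simp only [PowerSeries.coeff_mk]

lemma natDegree_descPochhammer_le (m : ℕ) :
    natDegree (descPochhammer (ZMod p) m) ≤ m := by
  induction m with
  | zero => simp [descPochhammer]
  | succ n ih =>
    rw [descPochhammer_succ_right]
    refine le_trans (natDegree_mul_le) ?_
    have : natDegree (X - (n : Polynomial (ZMod p))) ≤ 1 := by
      rw [← Polynomial.C_eq_natCast]
      exact (natDegree_X_sub_C _).le
    omega

lemma natDegree_ch_le (q : Polynomial (ZMod p)) (hq : natDegree q ≤ 1) (m : ℕ) :
    natDegree (ch p q m) ≤ m := by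
  unfold ch
  refine le_trans (natDegree_mul_le) ?_
  rw [natDegree_C]
  have := natDegree_comp_le (p := descPochhammer (ZMod p) m) (q := q)
  have := natDegree_descPochhammer_le p m
  nlinarith [natDegree_comp_le (p := descPochhammer (ZMod p) m) (q := q)]

lemma natDegree_bpoly_le (s n : ℕ) : natDegree (bpoly p s n) ≤ n := by
  unfold bpoly
  refine natDegree_sum_le_of_forall_le _ _ fun k hk => ?_
  rw [Finset.mem_range] at hk
  refine le_trans (natDegree_mul_le) ?_
  have h1 : natDegree (C ((-(s : ZMod p)⁻¹) ^ k) * ch p (X - 1) (n - k)) ≤ n - k := by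
    refine le_trans (natDegree_mul_le) ?_
    rw [natDegree_C]
    have := natDegree_ch_le p (X - 1 : Polynomial (ZMod p)) (by
      have : (X - 1 : Polynomial (ZMod p)) = X - C 1 := by simp
      rw [this]; exact (natDegree_X_sub_C _).le) (n - k)
    omega
  have h2 : natDegree (ch p (C (s : ZMod p) * X - 1) k) ≤ k := by
    refine natDegree_ch_le p _ ?_ k
    refine le_trans (natDegree_sub_le _ _) ?_
    simp [natDegree_C_mul_le]
    exact le_trans (natDegree_C_mul_le _ _) (by simp)
  omega

lemma coeff_comp_X_add_one (f : Polynomial (ZMod p)) (e : ℕ) (hf : natDegree f ≤ e + 1) :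
    (f.comp (X + 1)).coeff e = f.coeff e + ((e + 1 : ℕ) : ZMod p) * f.coeff (e + 1) := by
  have h1 : (X + 1 : Polynomial (ZMod p)) = X + C 1 := by simp
  have h2 : f.comp (X + 1) = taylor 1 f := by rw [taylor_apply, h1]
  rw [h2, taylor_coeff]
  have h3 : natDegree (hasseDeriv e f) < 2 := by
    have := natDegree_hasseDeriv_le f e
    omega
  rw [eval_eq_sum_range' h3]
  rw [Finset.sum_range_succ, Finset.sum_range_one]
  simp only [hasseDeriv_coeff, one_pow, mul_one, pow_zero]
  have hch : (1+e).choose e = e+1 := by rw [Nat.add_comm]; exact Nat.choose_succ_self_right e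
  rw [Nat.zero_add, Nat.choose_self, hch]
  push_cast
  ring_nf

lemma bpoly_natDegree_half (s : ℕ) (hs1 : 1 ≤ s) (hs2 : s + 2 ≤ p) :
    ∀ n, n ≤ p - 1 → natDegree (bpoly p s n) ≤ n / 2 := by
  have hp : 2 ≤ p := (Fact.out : p.Prime).two_le
  have hσ : ((s : ZMod p)) ≠ 0 := by
    rw [Ne, ZMod.natCast_eq_zero_iff]
    intro h
    have := Nat.le_of_dvd (by omega) h
    omega
  intro n
  induction n using Nat.strong_induction_on with
  | _ n ih =>
    intro hn
    match n, hn with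
    | 0, _ => 
      have : bpoly p s 0 = 1 := by
        unfold bpoly
        rw [Finset.sum_range_one, ch_zero, ch_zero]
        simp
      rw [this]; simp
    | 1, _ =>
      have : bpoly p s 1 = C (-1 - (-(s : ZMod p)⁻¹)) := by
        unfold bpoly
        rw [Finset.sum_range_succ, Finset.sum_range_one]
        rw [ch_zero, ch_zero]
        have e1 : ch p (X - 1 : Polynomial (ZMod p)) 1 = X - 1 := by
          unfold ch
          rw [descPochhammer_one]
          simp
        have e2 : ch p (C (s : ZMod p) * X - 1) 1 = C (s : ZMod p) * X - 1 := by
          unfold ch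
          rw [descPochhammer_one]
          simp
        rw [e1, e2]
        have hxσ : C (-(s:ZMod p)⁻¹) * (C (s:ZMod p) * X - 1) = -X + C ((s:ZMod p)⁻¹) := by
          rw [mul_sub, ← mul_assoc, ← C_mul]
          rw [show (-(s:ZMod p)⁻¹) * (s:ZMod p) = -1 by field_simp]
          simp
        simp only [pow_zero, pow_one, map_one, one_mul, mul_one]
        rw [hxσ, show (-1 - -(s:ZMod p)⁻¹) = (s:ZMod p)⁻¹ + (-1) from by ring, map_add, map_neg,
          map_one]
        ring
      rw [this]; simp
    | (n+2), hn =>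
      by_contra hcon
      push_neg at hcon
      set e := natDegree (bpoly p s (n+2)) with he
      have he1 : (n+2) / 2 + 1 ≤ e := hcon
      have heN : e ≤ n+2 := natDegree_bpoly_le p s (n+2)
      -- the recurrence, with first two terms peeled
      have hrec := bpoly_recurrence p s (n+2) hn
      rw [Finset.sum_range_succ' _ (n+2)] at hrec
      rw [Finset.sum_range_succ' _ (n+1)] at hrec
      have hterm0 : C (ucoef p s 0) * bpoly p s (n + 2 - 0) = bpoly p s (n+2) := by
        rw [ucoef_zero]; simp
      have hterm1 : C (ucoef p s (0+1)) * bpoly p s (n + 2 - (0+1)) = 0 := by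
        rw [ucoef_one p s hσ]; simp
      rw [hterm0, hterm1, add_zero] at hrec
      set S := ∑ i ∈ range (n+1), C (ucoef p s (i+1+1)) * bpoly p s (n + 2 - (i+1+1)) with hS
      have hSdeg : natDegree S ≤ (n+2) / 2 - 1 := by
        refine natDegree_sum_le_of_forall_le _ _ fun i hi => ?_
        refine le_trans (natDegree_mul_le) ?_
        rw [natDegree_C]
        have h1 : n + 2 - (i+1+1) < n + 2 := by omega
        have h2 : n + 2 - (i+1+1) ≤ p - 1 := by omega
        have := ih _ h1 h2
        omega
      -- coefficient at e-1
      have hcoeff := coeff_comp_X_add_one p (bpoly p s (n+2)) (e - 1) (by omega)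
      have he2 : e - 1 + 1 = e := by omega
      rw [he2] at hcoeff
      rw [hrec] at hcoeff
      rw [Polynomial.coeff_add] at hcoeff
      have hScoeff : S.coeff (e - 1) = 0 := by
        refine coeff_eq_zero_of_natDegree_lt ?_
        omega
      rw [hScoeff, zero_add] at hcoeff
      have hlead : (bpoly p s (n+2)).coeff e ≠ 0 := by
        rw [he]
        refine leadingCoeff_ne_zero.mpr ?_
        intro h0
        rw [h0] at he
        simp at he
        omega
      have hcast : ((e : ℕ) : ZMod p) ≠ 0 := by
        rw [Ne, ZMod.natCast_eq_zero_iff]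
        intro h
        have := Nat.le_of_dvd (by omega) h
        omega
      have : ((e : ℕ) : ZMod p) * (bpoly p s (n+2)).coeff e = 0 := by
        linear_combination -1 * hcoeff
      exact (mul_ne_zero hcast hlead) this

lemma desc_eval_prod (z : ZMod p) (m : ℕ) :
    eval z (descPochhammer (ZMod p) m) = ∏ i ∈ range m, (z - (i : ZMod p)) := by
  induction m with
  | zero => simp [descPochhammer]
  | succ k ih =>
    rw [descPochhammer_succ_right, eval_mul, ih, Finset.prod_range_succ]
    simp

lemma desc_eval_neg_one (m : ℕ) :
    eval (-1 : ZMod p) (descPochhammer (ZMod p) m) = (-1) ^ m * (m.factorial : ZMod p) := by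
  induction m with
  | zero => simp [descPochhammer]
  | succ k ih =>
    rw [descPochhammer_succ_right, eval_mul, ih]
    simp only [eval_sub, eval_X, eval_natCast, Nat.factorial_succ]
    push_cast
    ring

lemma desc_eval_zero_of_val_lt (z : ZMod p) (m : ℕ) (h : z.val < m) :
    eval z (descPochhammer (ZMod p) m) = 0 := by
  rw [desc_eval_prod]
  refine Finset.prod_eq_zero (Finset.mem_range.mpr h) ?_
  rw [ZMod.natCast_val, ZMod.cast_id]
  ring

lemma ch_eval (q : Polynomial (ZMod p)) (m : ℕ) (a : ZMod p) :
    eval a (ch p q m) = ((m.factorial : ZMod p))⁻¹ * eval (eval a q) (descPochhammer (ZMod p) m) := by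
  simp [ch, eval_comp]

lemma snez {s : ℕ} (hs1 : 1 ≤ s) (hs2 : s + 2 ≤ p) : ((s : ZMod p)) ≠ 0 := by
  rw [Ne, ZMod.natCast_eq_zero_iff]
  intro h
  have := Nat.le_of_dvd (by omega) h
  omega

lemma bpoly_eval_zero (hodd : Odd p) (s : ℕ) (hs1 : 1 ≤ s) (hs2 : s + 2 ≤ p) :
    eval 0 (bpoly p s (p - 1)) = 1 := by
  have hp : 2 ≤ p := (Fact.out : p.Prime).two_le
  have hσ := snez p hs1 hs2
  set x : ZMod p := -(s : ZMod p)⁻¹ with hx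
  have hterm : ∀ k ∈ range (p - 1 + 1),
      eval 0 (C (x ^ k) * ch p (X - 1) (p - 1 - k) * ch p (C (s : ZMod p) * X - 1) k)
        = x ^ k := by
    intro k hk
    rw [Finset.mem_range] at hk
    rw [eval_mul, eval_mul, eval_C, ch_eval, ch_eval]
    have e1 : eval 0 (X - 1 : Polynomial (ZMod p)) = -1 := by simp
    have e2 : eval 0 (C (s : ZMod p) * X - 1) = -1 := by simp
    rw [e1, e2, desc_eval_neg_one, desc_eval_neg_one]
    have f1 : ((p - 1 - k).factorial : ZMod p)⁻¹ * ((p-1-k).factorial : ZMod p) = 1 :=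
      inv_mul_cancel₀ (fact_ne_zero p (by omega))
    have f2 : ((k).factorial : ZMod p)⁻¹ * ((k).factorial : ZMod p) = 1 :=
      inv_mul_cancel₀ (fact_ne_zero p (by omega))
    have hsgn : (-1 : ZMod p) ^ (p - 1 - k) * (-1 : ZMod p) ^ k = 1 := by
      rw [← pow_add]
      have : p - 1 - k + k = p - 1 := by omega
      rw [this]
      exact Even.neg_one_pow (Nat.Odd.sub_odd hodd odd_one)
    calc x ^ k * (((p-1-k).factorial : ZMod p)⁻¹ * ((-1)^(p-1-k) * ((p-1-k).factorial : ZMod p)))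
          * ((k.factorial : ZMod p)⁻¹ * ((-1)^k * (k.factorial : ZMod p)))
        = x ^ k * ((-1 : ZMod p)^(p-1-k) * (-1 : ZMod p)^k)
            * (((p-1-k).factorial : ZMod p)⁻¹ * ((p-1-k).factorial : ZMod p))
            * ((k.factorial : ZMod p)⁻¹ * (k.factorial : ZMod p)) := by ring
      _ = x ^ k := by rw [hsgn, f1, f2]; ring
  unfold bpoly
  rw [eval_finset_sum]
  rw [Finset.sum_congr rfl hterm]
  have hx1 : x ≠ 1 := by
    intro h
    rw [hx] at h
    have hs' : (s : ZMod p) = -1 := by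
      have h2 : (s : ZMod p)⁻¹ = -1 := by linear_combination -h
      calc (s : ZMod p) = ((s : ZMod p)⁻¹)⁻¹ := (inv_inv _).symm
        _ = (-1 : ZMod p)⁻¹ := by rw [h2]
        _ = -1 := by rw [inv_neg, inv_one]
    have : ((s + 1 : ℕ) : ZMod p) = 0 := by push_cast [hs']; ring
    rw [ZMod.natCast_eq_zero_iff] at this
    have := Nat.le_of_dvd (by omega) this
    omega
  rw [geom_sum_eq hx1]
  have hn1 : p - 1 + 1 = p := by omega
  rw [hn1, ZMod.pow_card]
  rw [div_self (by intro h; apply hx1; linear_combination h)]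

lemma val_pair (w : ZMod p) (hw : w ≠ 0) (hp2 : 2 < p) :
    (w - 1).val + (-w - 1).val = p - 2 := by
  set u := (w - 1).val with hu
  set v := (-w - 1).val with hv
  have hup : u < p := ZMod.val_lt _
  have hvp : v < p := ZMod.val_lt _
  have hid : ∀ z : ZMod p, ((z.val : ℕ) : ZMod p) = z := by
    intro z; rw [ZMod.natCast_val, ZMod.cast_id]
  have hune : u ≠ p - 1 := by
    intro h
    apply hw
    have : w - 1 = ((p - 1 : ℕ) : ZMod p) := by rw [← h, hid]
    have hc : ((p - 1 : ℕ) : ZMod p) = -1 := by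
      have : ((p - 1 : ℕ) : ZMod p) + 1 = ((p : ℕ) : ZMod p) := by
        push_cast [Nat.cast_sub (by omega : 1 ≤ p)]
        ring
      rw [ZMod.natCast_self] at this
      linear_combination this
    rw [hc] at this
    linear_combination this
  have hvne : v ≠ p - 1 := by
    intro h
    apply hw
    have : -w - 1 = ((p - 1 : ℕ) : ZMod p) := by rw [← h, hid]
    have hc : ((p - 1 : ℕ) : ZMod p) = -1 := by
      have : ((p - 1 : ℕ) : ZMod p) + 1 = ((p : ℕ) : ZMod p) := by
        push_cast [Nat.cast_sub (by omega : 1 ≤ p)]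
        ring
      rw [ZMod.natCast_self] at this
      linear_combination this
    rw [hc] at this
    linear_combination -this
  have hcong : ((u + v : ℕ) : ZMod p) = ((p - 2 : ℕ) : ZMod p) := by
    push_cast
    rw [hid, hid]
    rw [Nat.cast_sub (by omega : 2 ≤ p), ZMod.natCast_self]
    push_cast
    ring
  rw [ZMod.natCast_eq_natCast_iff] at hcong
  have hmod : (u + v) % p = (p - 2) % p := hcong
  rw [Nat.mod_eq_of_lt (show p - 2 < p by omega)] at hmod
  have hdm := Nat.div_add_mod (u + v) p
  rw [hmod] at hdm
  have ht : (u + v) / p < 2 := Nat.div_lt_of_lt_mul (by omega)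
  interval_cases h : (u + v) / p <;> omega

lemma bpoly_eval_vanish (s : ℕ) (a : ZMod p)
    (h : (a - 1).val + ((s : ZMod p) * a - 1).val < p - 1) :
    eval a (bpoly p s (p - 1)) = 0 := by
  unfold bpoly
  rw [eval_finset_sum]
  refine Finset.sum_eq_zero fun k hk => ?_
  rw [Finset.mem_range] at hk
  rw [eval_mul, eval_mul, ch_eval, ch_eval]
  have e1 : eval a (X - 1 : Polynomial (ZMod p)) = a - 1 := by simp
  have e2 : eval a (C (s : ZMod p) * X - 1) = (s : ZMod p) * a - 1 := by simp
  rw [e1, e2]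
  by_cases hcase : ((s : ZMod p) * a - 1).val < k
  · rw [desc_eval_zero_of_val_lt p _ k hcase]
    ring
  · have : (a - 1).val < p - 1 - k := by omega
    rw [desc_eval_zero_of_val_lt p _ _ this]
    ring

lemma bpoly_eval_mul_neg (s : ℕ) (hs1 : 1 ≤ s) (hs2 : s + 2 ≤ p) (a : ZMod p) (ha : a ≠ 0) :
    eval a (bpoly p s (p - 1)) * eval (-a) (bpoly p s (p - 1)) = 0 := by
  have hσ := snez p hs1 hs2
  have hp2 : 2 < p := by omega
  have h1 := val_pair p a ha hp2
  have h2 := val_pair p ((s : ZMod p) * a) (mul_ne_zero hσ ha) hp2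
  have hrw : -((s : ZMod p) * a) - 1 = (s : ZMod p) * (-a) - 1 := by ring
  rw [hrw] at h2
  by_cases hcase : (a - 1).val + ((s : ZMod p) * a - 1).val < p - 1
  · rw [bpoly_eval_vanish p s a hcase, zero_mul]
  · have : ((-a) - 1).val + ((s : ZMod p) * (-a) - 1).val < p - 1 := by omega
    rw [bpoly_eval_vanish p s (-a) this, mul_zero]

lemma bpoly_key (hodd : Odd p) (s : ℕ) (hs1 : 1 ≤ s) (hs2 : s + 2 ≤ p) :
    bpoly p s (p - 1) * (bpoly p s (p - 1)).comp (-X) = 1 - X ^ (p - 1) := by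
  have hp : 2 ≤ p := (Fact.out : p.Prime).two_le
  set b := bpoly p s (p - 1) with hb
  set H := b * b.comp (-X) - (1 - X ^ (p - 1)) with hH
  have hdegb : natDegree b ≤ (p - 1) / 2 :=
    bpoly_natDegree_half p s hs1 hs2 (p - 1) le_rfl
  have hdegH : natDegree H < p := by
    have h1 : natDegree (b * b.comp (-X)) ≤ p - 1 := by
      refine le_trans natDegree_mul_le ?_
      have h2 : natDegree (b.comp (-X)) ≤ (p - 1) / 2 := by
        refine le_trans natDegree_comp_le ?_
        have : natDegree (-X : Polynomial (ZMod p)) = 1 := by simp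
        rw [this, mul_one]
        exact hdegb
      omega
    have h3 : natDegree (1 - X ^ (p - 1) : Polynomial (ZMod p)) ≤ p - 1 := by
      refine le_trans (natDegree_sub_le _ _) ?_
      simp [natDegree_X_pow]
    rw [hH]
    calc natDegree (b * b.comp (-X) - (1 - X ^ (p - 1)))
        ≤ max (natDegree (b * b.comp (-X))) (natDegree (1 - X ^ (p - 1))) :=
          natDegree_sub_le _ _
      _ ≤ p - 1 := max_le h1 h3
      _ < p := by omega
  have hzero : H = 0 := by
    refine Polynomial.eq_zero_of_natDegree_lt_card_of_eval_eq_zero H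
      (f := (id : ZMod p → ZMod p)) Function.injective_id ?_ ?_
    · intro a
      rw [hH]
      simp only [eval_sub, eval_mul, eval_one, eval_pow, eval_X, eval_comp, eval_neg, id]
      by_cases ha : a = 0
      · subst ha
        rw [neg_zero, bpoly_eval_zero p hodd s hs1 hs2]
        rw [zero_pow (by omega : p - 1 ≠ 0)]
        ring
      · rw [bpoly_eval_mul_neg p s hs1 hs2 a ha]
        rw [ZMod.pow_card_sub_one_eq_one ha]
        ring
    · rw [ZMod.card]
      exact hdegH
  exact sub_eq_zero.mp hzero

lemma bF_eq (s : ℕ) (hs1 : 1 ≤ s) (hs2 : s + 2 ≤ p) :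
    bF p 1 s (RatFunc.X : RatFunc (ZMod p))
      = algebraMap (Polynomial (ZMod p)) (RatFunc (ZMod p)) (bpoly p s (p - 1)) := by
  set K := RatFunc (ZMod p)
  set φ := algebraMap (Polynomial (ZMod p)) K with hφ
  set ψ := algebraMap (ZMod p) K with hψ
  have hψφC : ∀ c : ZMod p, φ (C c) = ψ c := by
    intro c
    rw [hψ, IsScalarTower.algebraMap_eq (ZMod p) (Polynomial (ZMod p)) K]
    simp [Polynomial.algebraMap_eq]
    rfl
  have hcomp : ∀ (q : Polynomial (ZMod p)) (m : ℕ),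
      φ ((descPochhammer (ZMod p) m).comp q) = eval (φ q) (descPochhammer K m) := by
    intro q m
    rw [Polynomial.comp, Polynomial.hom_eval₂]
    rw [Polynomial.eval₂_eq_eval_map]
    congr 1
    · rw [show φ.comp C = algebraMap (ZMod p) K from RingHom.ext hψφC]
      exact descPochhammer_map _ m
  have hch : ∀ (q : Polynomial (ZMod p)) (m : ℕ), m < p →
      φ (ch p q m) = eval (φ q) (descPochhammer K m) / ((m.factorial : K)) := by
    intro q m hm
    unfold ch
    rw [map_mul, hψφC, hcomp]
    rw [map_inv₀, map_natCast]
    rw [div_eq_inv_mul]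
  -- now expand both sides
  unfold bF bpoly
  rw [map_sum]
  have hrange : p - 1 + 1 = p := by
    have := (Fact.out : p.Prime).two_le; omega
  rw [hrange]
  refine Finset.sum_congr rfl fun k hk => ?_
  rw [Finset.mem_range] at hk
  rw [map_mul, map_mul, hψφC, hch _ _ (by omega), hch _ _ (by omega)]
  have e1 : φ (X - 1) = (RatFunc.X : RatFunc (ZMod p)) - 1 := by
    rw [map_sub, map_one, RatFunc.algebraMap_X]
  have e2 : φ (C (s : ZMod p) * X - 1) = (s : K) * RatFunc.X - 1 := by
    rw [map_sub, map_one, map_mul, hψφC, RatFunc.algebraMap_X, map_natCast]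
  rw [e1, e2]
  have e3 : ψ ((-(s : ZMod p)⁻¹) ^ k) = (-(1 : K) / (s : K)) ^ k := by
    rw [map_pow, map_neg, map_inv₀, map_natCast]
    congr 1
    rw [neg_div, one_div]
  rw [e3]
  unfold binomF
  rw [Nat.cast_one, one_mul]

end Aux

theorem stmt4 (p : ℕ) [Fact p.Prime] (hodd : Odd p) :
    ∀ k : ℕ, ∃ (f : Polynomial (ZMod p)) (m : ℕ),
      (Gpoly p (RatFunc.X : RatFunc (ZMod p))).coeff k =
        algebraMap (Polynomial (ZMod p)) (RatFunc (ZMod p)) f /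
          ((RatFunc.X : RatFunc (ZMod p)) ^ (p - 1) - 1) ^ m := by
  intro k
  have hp : 2 ≤ p := (Fact.out : p.Prime).two_le
  have hp3 : 3 ≤ p := by
    rcases Nat.lt_or_ge p 3 with h | h
    · interval_cases p
      · exact absurd hodd (by decide)
    · exact h
  set K := RatFunc (ZMod p)
  set φ := algebraMap (Polynomial (ZMod p)) K with hφ
  set XK : K := RatFunc.X with hXK
  -- coefficient extraction
  have hcoeff : (Gpoly p XK).coeff k
      = -(if k ∈ Finset.Icc 1 (p-1) then
          ((k : K)⁻¹ / ∏ s ∈ Finset.Icc 1 (k - 1), bF p 1 s XK) else 0) := by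
    unfold Gpoly
    rw [Polynomial.coeff_neg, Polynomial.finset_sum_coeff]
    congr 1
    have : ∀ j ∈ Finset.Icc 1 (p-1),
        (Polynomial.C ((j : K)⁻¹ / ∏ s ∈ Finset.Icc 1 (j - 1), bF p 1 s XK)
          * Polynomial.X ^ j).coeff k
        = if k = j then ((j : K)⁻¹ / ∏ s ∈ Finset.Icc 1 (j - 1), bF p 1 s XK) else 0 := by
      intro j hj
      rw [Polynomial.coeff_C_mul, Polynomial.coeff_X_pow, mul_ite, mul_one, mul_zero]
    rw [Finset.sum_congr rfl this]
    rw [Finset.sum_ite_eq (Finset.Icc 1 (p-1)) k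
      (fun j => ((j : K)⁻¹ / ∏ s ∈ Finset.Icc 1 (j - 1), bF p 1 s XK))]
  by_cases hk : k ∈ Finset.Icc 1 (p-1)
  · rw [Finset.mem_Icc] at hk
    obtain ⟨j, rfl⟩ : ∃ j, k = j + 1 := ⟨k - 1, by omega⟩
    rw [hcoeff, if_pos (Finset.mem_Icc.mpr hk)]
    have hj1 : (j + 1) - 1 = j := by omega
    rw [hj1]
    -- products
    set P : Polynomial (ZMod p) := ∏ s ∈ Finset.Icc 1 j, bpoly p s (p-1) with hP
    set Q : Polynomial (ZMod p) := ∏ s ∈ Finset.Icc 1 j, (bpoly p s (p-1)).comp (-X) with hQ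
    have hprod : (∏ s ∈ Finset.Icc 1 j, bF p 1 s XK) = φ P := by
      rw [hP, map_prod]
      refine Finset.prod_congr rfl fun s hs => ?_
      rw [Finset.mem_Icc] at hs
      exact bF_eq p s hs.1 (by omega)
    have hkey : P * Q = (1 - X ^ (p-1)) ^ j := by
      have h1 : ∀ s ∈ Finset.Icc 1 j,
          bpoly p s (p-1) * (bpoly p s (p-1)).comp (-X) = 1 - X ^ (p-1) := by
        intro s hs
        rw [Finset.mem_Icc] at hs
        exact bpoly_key p hodd s hs.1 (by omega)
      rw [hP, hQ, ← Finset.prod_mul_distrib, Finset.prod_congr rfl h1, Finset.prod_const,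
        Nat.card_Icc, Nat.add_sub_cancel]
    have hD : XK ^ (p-1) - 1 ≠ 0 := by
      intro h
      have h1 : XK ^ (p-1) = 1 := by linear_combination h
      have h2 : φ (X ^ (p-1)) = φ 1 := by
        rw [map_pow, map_one, RatFunc.algebraMap_X]
        exact h1
      have h3 := RatFunc.algebraMap_injective (ZMod p) h2
      have h4 := congrArg Polynomial.natDegree h3
      rw [Polynomial.natDegree_X_pow, Polynomial.natDegree_one] at h4
      omega
    have hDpow : (XK ^ (p-1) - 1) ^ j ≠ 0 := pow_ne_zero _ hD
    have hkeyK : φ P * φ Q = (-1)^j * (XK ^ (p-1) - 1) ^ j := by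
      rw [← map_mul, hkey, map_pow]
      rw [map_sub, map_one, map_pow, RatFunc.algebraMap_X]
      rw [show (1 - XK ^ (p-1)) = (-1) * (XK ^ (p-1) - 1) by ring]
      rw [mul_pow]
    have hφP : φ P ≠ 0 := by
      intro h
      rw [h, zero_mul] at hkeyK
      have : ((-1 : K))^j * (XK ^ (p-1) - 1)^j ≠ 0 :=
        mul_ne_zero (pow_ne_zero _ (by
          intro h1
          exact one_ne_zero (by linear_combination -h1))) hDpow
      exact this hkeyK.symm
    refine ⟨Polynomial.C ((-1 : ZMod p)^(j+1) * ((j+1 : ℕ) : ZMod p)⁻¹) * Q, j, ?_⟩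
    rw [hprod]
    rw [map_mul]
    have hψφC : ∀ c : ZMod p, φ (Polynomial.C c) = algebraMap (ZMod p) K c := by
      intro c
      rw [IsScalarTower.algebraMap_eq (ZMod p) (Polynomial (ZMod p)) K]
      simp [Polynomial.algebraMap_eq]
      rfl
    have hc : φ (Polynomial.C ((-1 : ZMod p)^(j+1) * ((j+1 : ℕ) : ZMod p)⁻¹))
        = (-1 : K)^(j+1) * (((j+1 : ℕ) : K))⁻¹ := by
      rw [hψφC, map_mul, map_pow, map_neg, map_one, map_inv₀, map_natCast]
    rw [hc]
    rw [show -((((j+1 : ℕ) : K))⁻¹ / φ P) = (-(((j+1 : ℕ) : K))⁻¹) / φ P from (neg_div _ _).symm]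
    rw [div_eq_div_iff hφP hDpow]
    have hsq : (-1 : K) ^ (j * 2) = 1 := by
      rw [pow_mul']
      norm_num
    linear_combination (-(-1 : K)^(j+1) * (((j+1 : ℕ) : K))⁻¹) * hkeyK
      + (((j+1 : ℕ) : K))⁻¹ * ((-1 + XK^(p-1))^j) * hsq
  · rw [hcoeff, if_neg hk]
    exact ⟨0, 0, by simp⟩
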